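/- Let f_i = c_i t^{a_i}, 0 ≤ i ≤ n, be n+1 monomials in n variables over the field k, and let π be any permutation of the index set {0,1,…,n}. Then [f_{π(0)}, f_{π(1)}, …, f_{π(n)}] = [f_0, f_1, …, f_n]^{sgn(π)}, where sgn(π) ∈ {1,−1} is the sign of the permutation π; that is, the symbol is multiplicatively skew-symmetric under arbitrary permutations of the monomials. -/

import Mathlib

open Matrix

/-- The strictly increasing embedding `Fin m → Fin (m + 2)` that skips the values
of `i` and `j` (for `i < j`): used to delete rows `i` and `j` of a matrix. -/
def skip2 {m : ℕ} (i j : Fin (m + 2)) (r : Fin m) : Fin (m + 2) :=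
  if r.val < i.val then ⟨r.val, by have := r.isLt; omega⟩
  else if r.val + 1 < j.val then ⟨r.val + 1, by have := r.isLt; omega⟩
  else ⟨r.val + 2, by have := r.isLt; omega⟩

/-- `B(A) = Σ_k Σ_{i<j} a_{ik} a_{jk} A^k_{ij}`, where `A^k_{ij}` is the determinant of
the matrix obtained from `A` by deleting rows `i`, `j` and column `k`. -/
def Bcoef {m : ℕ} (A : Matrix (Fin (m + 2)) (Fin (m + 1)) ℤ) : ℤ :=
  ∑ c : Fin (m + 1), ∑ i : Fin (m + 2), ∑ j : Fin (m + 2),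
    if i < j then A i c * A j c * (A.submatrix (skip2 i j) c.succAbove).det else 0

/-- The symbol `[c₀ t^{a₀}, …, c_{n} t^{a_n}] = (-1)^{B(A)} ∏ᵢ cᵢ^{(-1)ⁱ Aᵢ}` of `n + 1`
monomials in `n` variables (here `n = m + 1`), where `Aᵢ` is the determinant of the matrix
obtained from the exponent matrix `A` by deleting its `i`-th row. -/
def monomialSymbol {k : Type*} [Field k] {m : ℕ}
    (c : Fin (m + 2) → kˣ) (A : Matrix (Fin (m + 2)) (Fin (m + 1)) ℤ) : kˣ :=
  (-1) ^ Bcoef A *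
    ∏ i : Fin (m + 2), c i ^ ((-1 : ℤ) ^ (i : ℕ) * (A.submatrix i.succAbove id).det)

lemma skip2_val {m : ℕ} (i j : Fin (m + 2)) (r : Fin m) :
    (skip2 i j r).val =
      if r.val < i.val then r.val else if r.val + 1 < j.val then r.val + 1 else r.val + 2 := by
  unfold skip2; split_ifs <;> rfl

lemma skip2_injective {m : ℕ} {i j : Fin (m + 2)} (h : i < j) :
    Function.Injective (skip2 i j) := by
  intro a b hab
  have hij : i.val < j.val := h
  have : (skip2 i j a).val = (skip2 i j b).val := congrArg Fin.val hab
  rw [skip2_val, skip2_val] at this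
  apply Fin.ext
  split_ifs at this <;> omega

lemma skip2_ne {m : ℕ} {i j : Fin (m + 2)} (h : i < j) (r : Fin m) :
    skip2 i j r ≠ i ∧ skip2 i j r ≠ j := by
  have hij : i.val < j.val := h
  constructor <;>
    · intro hc
      have := congrArg Fin.val hc
      rw [skip2_val] at this
      split_ifs at this <;> omega

lemma skip2_surj {m : ℕ} {i j : Fin (m + 2)} (h : i < j) {x : Fin (m + 2)}
    (hxi : x ≠ i) (hxj : x ≠ j) : ∃ r, skip2 i j r = x := by
  have hij : i.val < j.val := h
  have hxi' : x.val ≠ i.val := fun hc => hxi (Fin.ext hc)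
  have hxj' : x.val ≠ j.val := fun hc => hxj (Fin.ext hc)
  have hj2 : j.val < m + 2 := j.isLt
  have hx2 : x.val < m + 2 := x.isLt
  have key : ∀ (y : ℕ) (hy : y < m), (skip2 i j ⟨y, hy⟩).val =
      if y < i.val then y else if y + 1 < j.val then y + 1 else y + 2 := by
    intro y hy; rw [skip2_val]
  by_cases h1 : x.val < i.val
  · exact ⟨⟨x.val, by omega⟩, Fin.ext (by rw [key]; split_ifs <;> omega)⟩
  · by_cases h2 : x.val < j.val
    · exact ⟨⟨x.val - 1, by omega⟩, Fin.ext (by rw [key]; split_ifs <;> omega)⟩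
    · exact ⟨⟨x.val - 2, by omega⟩, Fin.ext (by rw [key]; split_ifs <;> omega)⟩

lemma range_skip2 {m : ℕ} {i j : Fin (m + 2)} (h : i < j) :
    Set.range (skip2 i j) = {x | x ≠ i ∧ x ≠ j} := by
  ext x
  constructor
  · rintro ⟨r, rfl⟩; exact skip2_ne h r
  · rintro ⟨h1, h2⟩; exact skip2_surj h h1 h2

/-- If `π` maps `{i,j}` onto `{i',j'}`, then `π ∘ skip2 i j` is `skip2 i' j'` composed
with a permutation. -/
lemma exists_perm_skip2 {m : ℕ} (π : Equiv.Perm (Fin (m + 2))) {i j i' j' : Fin (m + 2)}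
    (hij : i < j) (hij' : i' < j')
    (hset : ∀ x, (π x = i' ∨ π x = j') ↔ (x = i ∨ x = j)) :
    ∃ τ : Equiv.Perm (Fin m), ∀ r, π (skip2 i j r) = skip2 i' j' (τ r) := by
  set f : Fin m → Fin (m + 2) := fun r => π (skip2 i j r) with hf
  have hfinj : Function.Injective f := fun a b hab =>
    skip2_injective hij (π.injective hab)
  have hginj : Function.Injective (skip2 i' j') := skip2_injective hij'
  have hrange : Set.range f = Set.range (skip2 i' j') := by
    rw [range_skip2 hij']
    ext x
    constructor
    · rintro ⟨r, rfl⟩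
      have h1 := (skip2_ne hij r).1
      have h2 := (skip2_ne hij r).2
      constructor <;> intro hc
      · rcases (hset (skip2 i j r)).mp (Or.inl hc) with h | h <;> [exact h1 h; exact h2 h]
      · rcases (hset (skip2 i j r)).mp (Or.inr hc) with h | h <;> [exact h1 h; exact h2 h]
    · rintro ⟨h1, h2⟩
      have hx : π.symm x ≠ i ∧ π.symm x ≠ j := by
        constructor <;> intro hc
        · rcases (hset (π.symm x)).mpr (Or.inl hc) with h | h <;>
            simp only [Equiv.apply_symm_apply] at h <;> [exact h1 h; exact h2 h]
        · rcases (hset (π.symm x)).mpr (Or.inr hc) with h | h <;>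
            simp only [Equiv.apply_symm_apply] at h <;> [exact h1 h; exact h2 h]
      obtain ⟨r, hr⟩ := by
        have := range_skip2 hij (i := i) (j := j)
        exact (Set.ext_iff.mp this (π.symm x)).mpr ⟨hx.1, hx.2⟩
      exact ⟨r, by simp [hf, hr]⟩
  refine ⟨(Equiv.ofInjective f hfinj).trans
    ((Equiv.setCongr hrange).trans (Equiv.ofInjective _ hginj).symm), fun r => ?_⟩
  show f r = skip2 i' j' _
  simp only [Equiv.trans_apply, Equiv.setCongr_apply]
  rw [Equiv.apply_ofInjective_symm hginj]
  simp [Equiv.ofInjective_apply]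

/-- The determinants of the two doubly-deleted submatrices agree mod 2. -/
lemma det_skip2_mod2 {m : ℕ} (A : Matrix (Fin (m + 2)) (Fin (m + 1)) ℤ)
    (π : Equiv.Perm (Fin (m + 2))) {i j i' j' : Fin (m + 2)}
    (hij : i < j) (hij' : i' < j')
    (hset : ∀ x, (π x = i' ∨ π x = j') ↔ (x = i ∨ x = j)) (cc : Fin m → Fin (m + 1)) :
    (((A.submatrix (fun r => π (skip2 i j r)) cc).det : ℤ) : ZMod 2) =
      ((A.submatrix (skip2 i' j') cc).det : ZMod 2) := by
  obtain ⟨τ, hτ⟩ := exists_perm_skip2 π hij hij' hset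
  have : A.submatrix (fun r => π (skip2 i j r)) cc =
      (A.submatrix (skip2 i' j') cc).submatrix τ id := by
    ext r s
    simp [Matrix.submatrix_apply, hτ r]
  rw [this, Matrix.det_permute, Int.cast_mul]
  rcases Int.units_eq_one_or (Equiv.Perm.sign τ) with h | h <;> rw [h] <;> push_cast <;>
    simp [CharTwo.neg_eq]

/-- `Bcoef` is invariant mod 2 under permutation of the rows. -/
lemma bcoef_mod2 {m : ℕ} (A : Matrix (Fin (m + 2)) (Fin (m + 1)) ℤ)
    (π : Equiv.Perm (Fin (m + 2))) :
    ((Bcoef (A.submatrix π id) : ℤ) : ZMod 2) = ((Bcoef A : ℤ) : ZMod 2) := by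
  unfold Bcoef
  push_cast [-Int.cast_det]
  refine Finset.sum_congr rfl fun cc _ => ?_
  have conv : ∀ (B : Matrix (Fin (m + 2)) (Fin (m + 1)) ℤ),
      (∑ i : Fin (m + 2), ∑ j : Fin (m + 2),
        if i < j then (B i cc : ZMod 2) * (B j cc : ZMod 2) *
          ((B.submatrix (skip2 i j) cc.succAbove).det : ZMod 2) else 0) =
      ∑ p ∈ Finset.filter (fun p : Fin (m + 2) × Fin (m + 2) => p.1 < p.2)
          (Finset.univ ×ˢ Finset.univ),
        (B p.1 cc : ZMod 2) * (B p.2 cc : ZMod 2) *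
          ((B.submatrix (skip2 p.1 p.2) cc.succAbove).det : ZMod 2) := by
    intro B
    rw [Finset.sum_filter, Finset.sum_product]
  refine Eq.trans (conv (A.submatrix π id)) (Eq.trans ?_ (conv A).symm)
  refine Finset.sum_nbij'
    (fun p => if π p.1 < π p.2 then (π p.1, π p.2) else (π p.2, π p.1))
    (fun q => if π⁻¹ q.1 < π⁻¹ q.2 then (π⁻¹ q.1, π⁻¹ q.2) else (π⁻¹ q.2, π⁻¹ q.1))
    ?_ ?_ ?_ ?_ ?_
  · rintro ⟨p1, p2⟩ hp
    simp only [Finset.mem_filter, Finset.mem_product, Finset.mem_univ, true_and] at hp ⊢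
    split_ifs with h
    · exact h
    · exact lt_of_le_of_ne (not_lt.mp h) fun hc => (ne_of_lt hp) (π.injective hc.symm)
  · rintro ⟨q1, q2⟩ hq
    simp only [Finset.mem_filter, Finset.mem_product, Finset.mem_univ, true_and] at hq ⊢
    split_ifs with h
    · exact h
    · exact lt_of_le_of_ne (not_lt.mp h) fun hc => (ne_of_lt hq) (π⁻¹.injective hc.symm)
  · rintro ⟨p1, p2⟩ hp
    simp only [Finset.mem_filter, Finset.mem_product, Finset.mem_univ, true_and] at hp
    dsimp only
    by_cases h : π p1 < π p2
    · rw [if_pos h]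
      simp [hp]
    · rw [if_neg h]
      simp [not_lt.mpr hp.le]
  · rintro ⟨q1, q2⟩ hq
    simp only [Finset.mem_filter, Finset.mem_product, Finset.mem_univ, true_and] at hq
    dsimp only
    by_cases h : π⁻¹ q1 < π⁻¹ q2
    · rw [if_pos h]
      simp [hq]
    · rw [if_neg h]
      simp [not_lt.mpr hq.le]
  · rintro ⟨p1, p2⟩ hp
    simp only [Finset.mem_filter, Finset.mem_product, Finset.mem_univ, true_and] at hp
    have hsub : (A.submatrix π id).submatrix (skip2 p1 p2) cc.succAbove =
        A.submatrix (fun r => π (skip2 p1 p2 r)) cc.succAbove := by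
      rw [Matrix.submatrix_submatrix]; rfl
    dsimp only
    by_cases h : π p1 < π p2
    · rw [if_pos h]
      simp only [Matrix.submatrix_apply, id_eq]
      rw [hsub, det_skip2_mod2 A π hp h (fun x => ?_) cc.succAbove]
      constructor
      · rintro (hc | hc)
        · exact Or.inl (π.injective hc)
        · exact Or.inr (π.injective hc)
      · rintro (rfl | rfl) <;> simp
    · rw [if_neg h]
      have h' : π p2 < π p1 :=
        lt_of_le_of_ne (not_lt.mp h) fun hc => (ne_of_lt hp) (π.injective hc.symm)
      simp only [Matrix.submatrix_apply, id_eq]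
      rw [hsub, det_skip2_mod2 A π hp h' (fun x => ?_) cc.succAbove]
      · ring
      constructor
      · rintro (hc | hc)
        · exact Or.inr (π.injective hc)
        · exact Or.inl (π.injective hc)
      · rintro (rfl | rfl) <;> simp

/-- Determinant of the square matrix built by prepending the standard basis column `e_{i0}`
to an `(m+2) × (m+1)` matrix: cofactor expansion along the first column. -/
lemma det_basisCol {m : ℕ} (M : Matrix (Fin (m + 2)) (Fin (m + 1)) ℤ) (i0 : Fin (m + 2)) :
    (Matrix.of fun r s => Fin.cases (if r = i0 then (1 : ℤ) else 0) (fun s' => M r s') s).det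
      = (-1) ^ (i0 : ℕ) * (M.submatrix i0.succAbove id).det := by
  rw [Matrix.det_succ_column_zero]
  rw [Finset.sum_eq_single i0]
  · have hsub : (Matrix.of fun r s => Fin.cases (if r = i0 then (1 : ℤ) else 0)
        (fun s' => M r s') s).submatrix i0.succAbove Fin.succ = M.submatrix i0.succAbove id := by
      ext r s
      simp [Matrix.submatrix_apply]
    rw [hsub]
    simp
  · intro b _ hb
    simp [hb]
  · simp

/-- Alternating behaviour of the signed row-deleted determinants under a permutation of
the rows. -/
lemma row_cofactor {m : ℕ} (A : Matrix (Fin (m + 2)) (Fin (m + 1)) ℤ)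
    (π : Equiv.Perm (Fin (m + 2))) (i : Fin (m + 2)) :
    ((-1 : ℤ) ^ (i : ℕ)) * ((A.submatrix π id).submatrix i.succAbove id).det
      = ((Equiv.Perm.sign π : ℤˣ) : ℤ) *
        ((-1) ^ ((π i : ℕ)) * (A.submatrix (π i).succAbove id).det) := by
  set N : Matrix (Fin (m + 2)) (Fin (m + 2)) ℤ :=
    Matrix.of fun r s => Fin.cases (if r = π i then (1 : ℤ) else 0) (fun s' => A r s') s with hN
  have h1 : N.submatrix π id = Matrix.of fun r s =>
      Fin.cases (if r = i then (1 : ℤ) else 0) (fun s' => (A.submatrix π id) r s') s := by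
    ext r s
    induction s using Fin.cases with
    | zero => simp [hN, Matrix.submatrix_apply, EmbeddingLike.apply_eq_iff_eq]
    | succ s' => simp [hN, Matrix.submatrix_apply]
  have h2 : (N.submatrix π id).det = ((Equiv.Perm.sign π : ℤˣ) : ℤ) * N.det := by
    simpa using Matrix.det_permute π N
  calc ((-1 : ℤ) ^ (i : ℕ)) * ((A.submatrix π id).submatrix i.succAbove id).det
      = (N.submatrix π id).det := (h1 ▸ det_basisCol (A.submatrix π id) i).symm
    _ = ((Equiv.Perm.sign π : ℤˣ) : ℤ) * N.det := h2
    _ = _ := by rw [det_basisCol A (π i)]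

/-- `(-1)^•` in `kˣ` only depends on the exponent mod 2. -/
lemma neg_one_zpow_congr {k : Type*} [Field k] {a b : ℤ}
    (h : ((a : ℤ) : ZMod 2) = ((b : ℤ) : ZMod 2)) : ((-1 : kˣ) ^ a) = (-1 : kˣ) ^ b := by
  have hmod : a ≡ b [ZMOD (2 : ℕ)] := (ZMod.intCast_eq_intCast_iff a b 2).mp h
  obtain ⟨t, ht⟩ := hmod.dvd
  have hb : b = a + 2 * t := by push_cast at ht ⊢; linarith
  rw [hb, _root_.zpow_add, _root_.zpow_mul]
  rw [show ((-1 : kˣ) ^ (2 : ℤ)) = 1 by rw [zpow_two]; simp, _root_.one_zpow, mul_one]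

/-- Multiplicative skew-symmetry of the symbol of monomials under an arbitrary
permutation `π` of the index set: `[f_{π(0)},…,f_{π(n)}] = [f₀,…,fₙ]^{sgn π}`. -/
theorem monomialSymbol_perm {k : Type*} [Field k] {m : ℕ}
    (c : Fin (m + 2) → kˣ) (A : Matrix (Fin (m + 2)) (Fin (m + 1)) ℤ)
    (π : Equiv.Perm (Fin (m + 2))) :
    monomialSymbol (c ∘ π) (A.submatrix π id) =
      monomialSymbol c A ^ ((Equiv.Perm.sign π : ℤˣ) : ℤ) := by
  set s : ℤ := ((Equiv.Perm.sign π : ℤˣ) : ℤ) with hs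
  unfold monomialSymbol
  rw [mul_zpow]
  have hsign : ((-1 : kˣ) ^ Bcoef (A.submatrix π id)) = ((-1 : kˣ) ^ Bcoef A) ^ s := by
    rcases Int.units_eq_one_or (Equiv.Perm.sign π) with h | h
    · rw [hs, h]
      push_cast
      rw [zpow_one]
      exact neg_one_zpow_congr (bcoef_mod2 A π)
    · rw [hs, h]
      push_cast
      rw [_root_.zpow_neg_one, ← _root_.zpow_neg]
      refine neg_one_zpow_congr ?_
      rw [Int.cast_neg, CharTwo.neg_eq]
      exact bcoef_mod2 A π
  have hprod : (∏ i : Fin (m + 2), (c ∘ π) i ^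
        ((-1 : ℤ) ^ (i : ℕ) * ((A.submatrix π id).submatrix i.succAbove id).det))
      = (∏ i : Fin (m + 2), c i ^ ((-1 : ℤ) ^ (i : ℕ) * (A.submatrix i.succAbove id).det)) ^ s := by
    have step1 : ∀ i : Fin (m + 2), (c ∘ π) i ^
        ((-1 : ℤ) ^ (i : ℕ) * ((A.submatrix π id).submatrix i.succAbove id).det)
        = (c (π i) ^ ((-1 : ℤ) ^ ((π i : ℕ)) * (A.submatrix (π i).succAbove id).det)) ^ s := by
      intro i
      rw [Function.comp_apply, row_cofactor A π i, ← hs, mul_comm s, _root_.zpow_mul]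
    rw [Finset.prod_congr rfl fun i _ => step1 i]
    rw [← Finset.prod_zpow]
    exact Equiv.prod_comp π fun j =>
      (c j ^ ((-1 : ℤ) ^ ((j : ℕ)) * (A.submatrix j.succAbove id).det)) ^ s
  rw [hsign, hprod]
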